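/- Let l ∈ (0, 1/6), r = 1 − 2l, c = l·r², and let M be as defined. Define f : [0,1] → ℝ by f(x) = c·log l − (1/3)(c·log c − c) + (1/6)((2x−1)³ − (2l−1)³) for 0 ≤ x ≤ l; f(x) = c·log x − (1/3)(c·log c − c) for l ≤ x ≤ r; and f(x) = c·log r − (1/3)(c·log c − c) + (1/4)(x² − r²) − (1/6)(x³ − r³) for r ≤ x ≤ 1. Then f(x) + f(y) + f(z) ≤ x·y·z for all (x,y,z) ∈ [0,1]³, with equality for all (x,y,z) ∈ M. -/

import Mathlib

open Set

/-- The set `M ⊆ [0,1]³`: the union of the three segments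
`Mx = {(t, 1−2t, 1−2t) : 0 ≤ t ≤ l}`, `My = {(1−2t, t, 1−2t) : 0 ≤ t ≤ l}`,
`Mz = {(1−2t, 1−2t, t) : 0 ≤ t ≤ l}` and the two-dimensional piece
`M₂ = {(x,y,z) : l ≤ x,y,z ≤ 1−2l, xyz = l(1−2l)²}`. -/
def Mset (l : ℝ) : Set (ℝ × ℝ × ℝ) :=
  {p | ∃ t, 0 ≤ t ∧ t ≤ l ∧
    (p = (t, 1 - 2*t, 1 - 2*t) ∨ p = (1 - 2*t, t, 1 - 2*t) ∨ p = (1 - 2*t, 1 - 2*t, t))} ∪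
  {p | l ≤ p.1 ∧ p.1 ≤ 1 - 2*l ∧ l ≤ p.2.1 ∧ p.2.1 ≤ 1 - 2*l ∧ l ≤ p.2.2 ∧ p.2.2 ≤ 1 - 2*l ∧
    p.1 * p.2.1 * p.2.2 = l * (1 - 2*l)^2}

/-- The explicit dual potential for the cost function `xyz`, with `r = 1 − 2l`, `c = l·r²`:
`f(x) = c·log l − (1/3)(c·log c − c) + (1/6)((2x−1)³ − (2l−1)³)` for `0 ≤ x ≤ l`,
`f(x) = c·log x − (1/3)(c·log c − c)` for `l ≤ x ≤ r`,
`f(x) = c·log r − (1/3)(c·log c − c) + (1/4)(x² − r²) − (1/6)(x³ − r³)` for `r ≤ x ≤ 1`. -/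
noncomputable def dualF (l : ℝ) (x : ℝ) : ℝ :=
  if x ≤ l then
    (l * (1 - 2*l)^2) * Real.log l
      - (1/3) * ((l * (1 - 2*l)^2) * Real.log (l * (1 - 2*l)^2) - (l * (1 - 2*l)^2))
      + (1/6) * ((2*x - 1)^3 - (2*l - 1)^3)
  else if x ≤ 1 - 2*l then
    (l * (1 - 2*l)^2) * Real.log x
      - (1/3) * ((l * (1 - 2*l)^2) * Real.log (l * (1 - 2*l)^2) - (l * (1 - 2*l)^2))
  else
    (l * (1 - 2*l)^2) * Real.log (1 - 2*l)
      - (1/3) * ((l * (1 - 2*l)^2) * Real.log (l * (1 - 2*l)^2) - (l * (1 - 2*l)^2))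
      + (1/4) * (x^2 - (1 - 2*l)^2) - (1/6) * (x^3 - (1 - 2*l)^3)

set_option maxHeartbeats 1000000

/-! ### Auxiliary definitions and lemmas -/

noncomputable def cc (l : ℝ) : ℝ := l * (1 - 2*l)^2
noncomputable def KK (l : ℝ) : ℝ := -(1/3) * (cc l * Real.log (cc l) - cc l)

private lemma logMono : MonotoneOn (fun w : ℝ => Real.log (1+w) - w + w^2/2) (Set.Ioi (-1 : ℝ)) := by
  have hderiv : ∀ w ∈ Set.Ioi (-1:ℝ),
      HasDerivAt (fun w : ℝ => Real.log (1+w) - w + w^2/2) (1/(1+w) - 1 + w) w := by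
    intro w hw
    have h1 : (0:ℝ) < 1 + w := by have := Set.mem_Ioi.mp hw; linarith
    have hlog : HasDerivAt (fun w : ℝ => Real.log (1+w)) (1/(1+w)) w := by
      have := (Real.hasDerivAt_log (ne_of_gt h1)).comp w
        ((hasDerivAt_id w).const_add (1:ℝ))
      simpa [one_div, Function.comp_def] using this
    have hsq : HasDerivAt (fun w : ℝ => w^2/2) w w := by
      have := ((hasDerivAt_pow 2 w).div_const 2)
      norm_num at this
      simpa using this
    exact (hlog.sub (hasDerivAt_id w)).add hsq
  apply monotoneOn_of_deriv_nonneg (convex_Ioi _)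
  · intro w hw
    exact (hderiv w hw).continuousAt.continuousWithinAt
  · intro w hw
    rw [interior_Ioi] at hw
    exact (hderiv w hw).differentiableAt.differentiableWithinAt
  · intro w hw
    rw [interior_Ioi] at hw
    rw [(hderiv w hw).deriv]
    have h1 : (0:ℝ) < 1 + w := by have := Set.mem_Ioi.mp hw; linarith
    have : 1/(1+w) - 1 + w = w^2/(1+w) := by field_simp; ring
    rw [this]
    positivity

private lemma log_ge_quad {w : ℝ} (h0 : 0 ≤ w) : w - w^2/2 ≤ Real.log (1+w) := by
  have h := logMono (Set.mem_Ioi.mpr (by norm_num : (-1:ℝ) < 0))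
    (Set.mem_Ioi.mpr (by linarith : (-1:ℝ) < w)) h0
  simp only [add_zero, Real.log_one] at h
  norm_num at h
  linarith

private lemma log_le_quad {t : ℝ} (h0 : 0 ≤ t) (h1 : t < 1) : Real.log (1-t) ≤ -t - t^2/2 := by
  have h := logMono (Set.mem_Ioi.mpr (by linarith : (-1:ℝ) < -t))
    (Set.mem_Ioi.mpr (by norm_num : (-1:ℝ) < 0)) (by linarith)
  norm_num at h
  have e : 1 + -t = 1 - t := by ring
  rw [e] at h
  linarith

private lemma dualF_I {l x : ℝ} (h : x ≤ l) :
    dualF l x = cc l * Real.log l + KK l + (1/6) * ((2*x - 1)^3 - (2*l - 1)^3) := by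
  rw [dualF, if_pos h, KK, cc]; ring

private lemma dualF_II {l x : ℝ} (h1 : l ≤ x) (h2 : x ≤ 1 - 2*l) :
    dualF l x = cc l * Real.log x + KK l := by
  rcases eq_or_lt_of_le h1 with rfl | h
  · rw [dualF, if_pos le_rfl, KK, cc]; ring
  · rw [dualF, if_neg (not_le.mpr h), if_pos h2, KK, cc]; ring

private lemma dualF_III {l x : ℝ} (hl0 : 0 < l) (hl6 : l ≤ 1/6) (h1 : 1 - 2*l ≤ x) :
    dualF l x = cc l * Real.log (1 - 2*l) + KK l
      + (1/4) * (x^2 - (1 - 2*l)^2) - (1/6) * (x^3 - (1 - 2*l)^3) := by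
  have hlr : l < 1 - 2*l := by linarith
  rcases eq_or_lt_of_le h1 with rfl | h
  · rw [dualF, if_neg (by linarith), if_pos le_rfl, KK, cc]; ring
  · rw [dualF, if_neg (by linarith), if_neg (not_le.mpr h), KK, cc]; ring

private lemma cc_pos {l : ℝ} (hl0 : 0 < l) (hl6 : l ≤ 1/6) : 0 < cc l := by
  rw [cc]; have : (0:ℝ) < 1 - 2*l := by linarith
  positivity

private lemma log_cc {l : ℝ} (hl0 : 0 < l) (hl6 : l ≤ 1/6) :
    Real.log (cc l) = Real.log l + 2 * Real.log (1 - 2*l) := by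
  have hr : (0:ℝ) < 1 - 2*l := by linarith
  rw [cc, Real.log_mul (ne_of_gt hl0) (by positivity), Real.log_pow]
  norm_num

private lemma const_sum {l : ℝ} (hl0 : 0 < l) (hl6 : l ≤ 1/6) :
    cc l * Real.log l + 2 * (cc l * Real.log (1 - 2*l)) + 3 * KK l = cc l := by
  rw [KK, log_cc hl0 hl6]; ring

private lemma amgm {l t : ℝ} (hl0 : 0 < l) (hl6 : l ≤ 1/6) (ht : 0 < t) :
    cc l * Real.log t ≤ t - cc l + cc l * Real.log (cc l) := by
  have hc := cc_pos hl0 hl6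
  have h := Real.log_le_sub_one_of_pos (div_pos ht hc)
  rw [Real.log_div (ne_of_gt ht) (ne_of_gt hc)] at h
  have h2 := mul_le_mul_of_nonneg_left h (le_of_lt hc)
  have e : cc l * (t / cc l - 1) = t - cc l := by field_simp
  rw [e] at h2
  linarith [h2]

private lemma tangent_r {l y : ℝ} (hl0 : 0 < l) (hl6 : l ≤ 1/6) (hy : 0 < y) :
    cc l * Real.log y ≤ cc l * Real.log (1 - 2*l) + l*(1 - 2*l)*(y - (1 - 2*l)) := by
  have hr0 : (0:ℝ) < 1 - 2*l := by linarith
  have h := Real.log_le_sub_one_of_pos (div_pos hy hr0)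
  rw [Real.log_div (ne_of_gt hy) (ne_of_gt hr0)] at h
  have h2 := mul_le_mul_of_nonneg_left h (le_of_lt (cc_pos hl0 hl6))
  have e : cc l * (y/(1 - 2*l) - 1) = l*(1 - 2*l)*(y - (1 - 2*l)) := by
    rw [cc]; field_simp [show (1:ℝ) - l*2 ≠ 0 from ne_of_gt (by linarith)]
  rw [e] at h2
  linarith [h2]

private lemma tangent_r_quad {l y : ℝ} (hl0 : 0 < l) (hl6 : l ≤ 1/6)
    (hyl : l ≤ y) (hyr : y ≤ 1 - 2*l) :
    cc l * Real.log y ≤ cc l * Real.log (1 - 2*l)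
      + (l*(1 - 2*l)*(y - (1 - 2*l)) - l*(y - (1 - 2*l))^2/2) := by
  have hr0 : (0:ℝ) < 1 - 2*l := by linarith
  have hy0 : (0:ℝ) < y := lt_of_lt_of_le hl0 hyl
  set t := ((1 - 2*l) - y)/(1 - 2*l) with hts
  have ht0 : 0 ≤ t := div_nonneg (by linarith) (le_of_lt hr0)
  have ht1 : t < 1 := by rw [hts, div_lt_one hr0]; linarith
  have h := log_le_quad ht0 ht1
  have e1 : 1 - t = y/(1 - 2*l) := by rw [hts]; field_simp; ring
  rw [e1, Real.log_div (ne_of_gt hy0) (ne_of_gt hr0)] at h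
  have h2 := mul_le_mul_of_nonneg_left h (le_of_lt (cc_pos hl0 hl6))
  have e2 : cc l * (-t - t^2/2)
      = l*(1 - 2*l)*(y - (1 - 2*l)) - l*(y - (1 - 2*l))^2/2 := by
    rw [hts, cc]; field_simp [show (1:ℝ) - l*2 ≠ 0 from ne_of_gt (by linarith)]; ring
  rw [e2] at h2
  linarith [h2]

private lemma fbound_III {l z : ℝ} (hl0 : 0 < l) (hl6 : l ≤ 1/6)
    (hzr : 1 - 2*l ≤ z) :
    dualF l z ≤ cc l * Real.log z + KK l := by
  rw [dualF_III hl0 hl6 hzr]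
  have hr0 : (0:ℝ) < 1 - 2*l := by linarith
  set w := (z - (1 - 2*l))/(1 - 2*l) with hws
  have hw0 : 0 ≤ w := div_nonneg (by linarith) (le_of_lt hr0)
  have h := log_ge_quad hw0
  have e1 : 1 + w = z/(1 - 2*l) := by rw [hws]; field_simp; ring
  rw [e1, Real.log_div (by linarith : z ≠ 0) (ne_of_gt hr0)] at h
  have h2 := mul_le_mul_of_nonneg_left h (le_of_lt (cc_pos hl0 hl6))
  have e2 : cc l * (w - w^2/2)
      = l*(1 - 2*l)*(z - (1 - 2*l)) - l*(z - (1 - 2*l))^2/2 := by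
    rw [hws, cc]; field_simp [show (1:ℝ) - l*2 ≠ 0 from ne_of_gt (by linarith)]
  rw [e2] at h2
  have p1 : 0 ≤ (z - (1 - 2*l))^2 * ((1 - 6*l)/4 + (z - (1 - 2*l))/6) :=
    mul_nonneg (sq_nonneg _) (by linarith)
  nlinarith [h2, p1]

private lemma fI_le {l x : ℝ} (hx : x ≤ l) :
    dualF l x ≤ cc l * Real.log l + KK l := by
  rw [dualF_I hx]
  have h : 0 ≤ (2*l - 2*x) * ((2*x - 1)^2 + (2*x - 1)*(2*l - 1) + (2*l - 1)^2) :=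
    mul_nonneg (by linarith)
      (by nlinarith [sq_nonneg (2*x - 1 + (2*l - 1)), sq_nonneg (2*x - 1 - (2*l - 1))])
  nlinarith [h]

private lemma fmax {l z : ℝ} (hl0 : 0 < l) (hl6 : l ≤ 1/6) (hz0 : 0 ≤ z) (hz1 : z ≤ 1) :
    dualF l z ≤ cc l * Real.log (1 - 2*l) + KK l
      + ((1/4) * (1 - (1 - 2*l)^2) - (1/6) * (1 - (1 - 2*l)^3)) := by
  have hr0 : (0:ℝ) < 1 - 2*l := by linarith
  have hcc := le_of_lt (cc_pos hl0 hl6)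
  have hQ1 : 0 ≤ (1/4) * (1 - (1 - 2*l)^2) - (1/6) * (1 - (1 - 2*l)^3) := by
    nlinarith [mul_nonneg (mul_nonneg hl0.le hl0.le) (by linarith : (0:ℝ) ≤ 3 - 4*l)]
  rcases le_or_gt z l with h | h
  · have := fI_le h
    have hlog : Real.log l ≤ Real.log (1 - 2*l) := Real.log_le_log hl0 (by linarith)
    have := mul_le_mul_of_nonneg_left hlog hcc
    linarith
  · rcases le_or_gt z (1 - 2*l) with h2 | h2
    · rw [dualF_II (le_of_lt h) h2]
      have hlog : Real.log z ≤ Real.log (1 - 2*l) := Real.log_le_log (by linarith) h2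
      have := mul_le_mul_of_nonneg_left hlog hcc
      linarith
    · rw [dualF_III hl0 hl6 (le_of_lt h2)]
      nlinarith [mul_nonneg (sq_nonneg (1 - z)) (by linarith : (0:ℝ) ≤ 2*z + 1)]

private lemma sum_neg {l : ℝ} (hl0 : 0 < l) (hl6 : l ≤ 1/6) :
    2 * (cc l * Real.log l + KK l) + (cc l * Real.log (1 - 2*l) + KK l
      + ((1/4) * (1 - (1 - 2*l)^2) - (1/6) * (1 - (1 - 2*l)^3))) ≤ 0 := by
  have hr0 : (0:ℝ) < 1 - 2*l := by linarith
  have hcc := cc_pos hl0 hl6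
  have h4 : (4:ℝ) ≤ (1 - 2*l)/l := by rw [le_div_iff₀ hl0]; linarith
  have hlog4 : Real.log 4 ≤ Real.log ((1 - 2*l)/l) := Real.log_le_log (by norm_num) h4
  rw [Real.log_div (ne_of_gt hr0) (ne_of_gt hl0)] at hlog4
  have h42 : Real.log 4 = 2 * Real.log 2 := by
    rw [show (4:ℝ) = 2^2 by norm_num, Real.log_pow]; norm_num
  have hl2 : (0.6931471803 : ℝ) < Real.log 2 := Real.log_two_gt_d9
  have hkey : cc l * (2 * 0.6931471803) ≤ cc l * (Real.log (1 - 2*l) - Real.log l) := by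
    apply mul_le_mul_of_nonneg_left _ (le_of_lt hcc)
    rw [h42] at hlog4; linarith
  have hconst := const_sum hl0 hl6
  have hpoly : 0.3862943606 * (l * (1 - 2*l)^2) - l^2 + (4/3) * l^3 ≥ 0 := by
    nlinarith [mul_nonneg (sub_nonneg.mpr hl6) hl0.le, sq_nonneg (1/6 - l),
      mul_nonneg (mul_nonneg hl0.le hl0.le) (sub_nonneg.mpr hl6)]
  have hccval : cc l = l * (1 - 2*l)^2 := rfl
  nlinarith [hkey, hconst, hpoly]

private lemma polyS1 {l x y z : ℝ} (hl6 : l ≤ 1/6) (hx0 : 0 ≤ x) (hxl : x ≤ l)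
    (hy : 1 - 2*l ≤ y) (hz : 1 - 2*l ≤ z) :
    cc l + (1/6) * ((2*x - 1)^3 - (2*l - 1)^3)
      + ((1/4) * (y^2 - (1 - 2*l)^2) - (1/6) * (y^3 - (1 - 2*l)^3))
      + ((1/4) * (z^2 - (1 - 2*l)^2) - (1/6) * (z^3 - (1 - 2*l)^3)) ≤ x * y * z := by
  rw [cc]
  have h1 : 0 ≤ x * (y + z - 2 + 4*x)^2 := mul_nonneg hx0 (sq_nonneg _)
  have h2 : 0 ≤ (y - 1 + 2*x)^2 * (y - (1 - 2*l)) :=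
    mul_nonneg (sq_nonneg _) (by linarith)
  have h3 : 0 ≤ (z - 1 + 2*x)^2 * (z - (1 - 2*l)) :=
    mul_nonneg (sq_nonneg _) (by linarith)
  have h4 : 0 ≤ (3/2 - 7*x - 2*l) * ((y - 1 + 2*x)^2 + (z - 1 + 2*x)^2) :=
    mul_nonneg (by linarith) (by positivity)
  linarith

private lemma polyS3 {l x y z : ℝ} (hl6 : l ≤ 1/6) (hx0 : 0 ≤ x) (hxl : x ≤ l)
    (hy1 : 0 ≤ y) (hy : y ≤ 1 - 2*l) (hz1 : 0 ≤ z) (hz : z ≤ 1 - 2*l) :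
    cc l + (1/6) * ((2*x - 1)^3 - (2*l - 1)^3)
      + l*(1 - 2*l)*(y - (1 - 2*l)) + l*(1 - 2*l)*(z - (1 - 2*l)) ≤ x * y * z := by
  rw [cc]
  have hxz : x * z ≤ l * (1 - 2*l) := mul_le_mul hxl hz hz1 (by linarith)
  have h1 : 0 ≤ ((1 - 2*l) - y) * (l*(1 - 2*l) - x*z) :=
    mul_nonneg (by linarith) (by linarith)
  have h2 : 0 ≤ (1 - 2*l) * ((1 - 2*l) - z) * (l - x) :=
    mul_nonneg (mul_nonneg (by linarith) (by linarith)) (by linarith)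
  have h3 : 0 ≤ (1 - 2*l) * (l - x)^2 := mul_nonneg (by linarith) (sq_nonneg _)
  have h4 : 0 ≤ (l - x)^3 := pow_nonneg (by linarith) 3
  linarith

private lemma polyS2 {l x y z : ℝ} (hl0 : 0 < l) (hl6 : l ≤ 1/6) (hx0 : 0 ≤ x) (hxl : x ≤ l)
    (hyr : y ≤ 1 - 2*l) (hzr : 1 - 2*l ≤ z) :
    cc l + (1/6) * ((2*x - 1)^3 - (2*l - 1)^3)
      + (l*(1 - 2*l)*(y - (1 - 2*l)) - l*(y - (1 - 2*l))^2/2)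
      + ((1/4) * (z^2 - (1 - 2*l)^2) - (1/6) * (z^3 - (1 - 2*l)^3)) ≤ x * y * z := by
  rw [cc]
  have g1 : 0 ≤ x * (z - 1 + 4*x - 2*l)^2 := mul_nonneg hx0 (sq_nonneg _)
  have g3 : 0 ≤ (z - 1 + 2*x)^2 * (z - (1 - 2*l)) := mul_nonneg (sq_nonneg _) (by linarith)
  have g4 : 0 ≤ (3/2 - 7*x - 2*l) * ((2*x - 2*l)^2 + (z - 1 + 2*x)^2) :=
    mul_nonneg (by linarith) (by positivity)
  by_cases he : x*z ≤ l*(1 - 2*l)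
  · have p1 : 0 ≤ ((1 - 2*l) - y) * (l*(1 - 2*l) - x*z) :=
      mul_nonneg (by linarith) (by linarith)
    have p2 : 0 ≤ l * ((1 - 2*l) - y)^2 := mul_nonneg (le_of_lt hl0) (sq_nonneg _)
    linarith
  · push_neg at he
    have he' : 0 ≤ x*z - l*(1 - 2*l) := le_of_lt (sub_pos.mpr he)
    have hxs : x*(z - (1 - 2*l)) ≤ l*(z - (1 - 2*l)) :=
      mul_le_mul_of_nonneg_right hxl (by linarith)
    have h4d : 4*(l - x) ≤ z - (1 - 2*l) := by
      have hh : l*(4*(l - x)) ≤ l*(z - (1 - 2*l)) := by nlinarith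
      exact le_of_mul_le_mul_left (by linarith) hl0
    have t1 : 0 ≤ 3*(1 - 6*l)*(l - x)*(x*z - l*(1 - 2*l)) :=
      mul_nonneg (mul_nonneg (by linarith) (by linarith)) he'
    have t2 : 0 ≤ 3*(l - x)*(z - (1 - 2*l))*(x*z - l*(1 - 2*l)) :=
      mul_nonneg (mul_nonneg (by linarith) (by linarith)) he'
    have t3 : 0 ≤ l*((3/4)*(1 - 6*l)*(z - (1 - 2*l))^2) :=
      mul_nonneg (le_of_lt hl0) (mul_nonneg (by linarith) (sq_nonneg _))
    have t4 : 0 ≤ l*((3/4)*(1 - 6*l)*(z - (1 - 2*l))*((z - (1 - 2*l)) - 4*(l - x))) :=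
      mul_nonneg (le_of_lt hl0)
        (mul_nonneg (mul_nonneg (by linarith) (by linarith)) (by linarith))
    have t5 : 0 ≤ l*(3*(l - x)*(z - (1 - 2*l))*((z - (1 - 2*l)) - 4*(l - x))) :=
      mul_nonneg (le_of_lt hl0)
        (mul_nonneg (mul_nonneg (by linarith) (by linarith)) (by linarith))
    have t6 : 0 ≤ l*(z - (1 - 2*l))^3 :=
      mul_nonneg (le_of_lt hl0) (pow_nonneg (by linarith) 3)
    have t7 : 0 ≤ l*(8*(l - x)^3) :=
      mul_nonneg (le_of_lt hl0) (mul_nonneg (by norm_num) (pow_nonneg (by linarith) 3))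
    have sq1 : 0 ≤ 3*((x*z - l*(1 - 2*l)) - l*((1 - 2*l) - y))^2 := by positivity
    have key : 0 ≤ 6*l*(x*y*z - (l*(1 - 2*l)^2 + (1/6) * ((2*x - 1)^3 - (2*l - 1)^3)
        + (l*(1 - 2*l)*(y - (1 - 2*l)) - l*(y - (1 - 2*l))^2/2)
        + ((1/4) * (z^2 - (1 - 2*l)^2) - (1/6) * (z^3 - (1 - 2*l)^3)))) := by
      linarith [t1, t2, t3, t4, t5, t6, t7, sq1]
    nlinarith [key, mul_pos hl0 hl0]

/-- The core inequality for sorted triples. -/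
private lemma core {l x y z : ℝ} (hl0 : 0 < l) (hl6 : l ≤ 1/6)
    (hx0 : 0 ≤ x) (hz1 : z ≤ 1) (hxy : x ≤ y) (hyz : y ≤ z) :
    dualF l x + dualF l y + dualF l z ≤ x * y * z := by
  have hr0 : (0:ℝ) < 1 - 2*l := by linarith
  have hy1 : y ≤ 1 := le_trans hyz hz1
  have hx1 : x ≤ 1 := le_trans hxy hy1
  have hy0 : 0 ≤ y := le_trans hx0 hxy
  have hz0 : 0 ≤ z := le_trans hy0 hyz
  have h3K : 3 * KK l = cc l - cc l * Real.log (cc l) := by rw [KK]; ring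
  rcases le_or_gt l x with hlx | hlx
  · -- all three in [l,1]
    have fb : ∀ t : ℝ, l ≤ t → t ≤ 1 → dualF l t ≤ cc l * Real.log t + KK l := by
      intro t h1 h2
      rcases le_or_gt t (1 - 2*l) with h3 | h3
      · rw [dualF_II h1 h3]
      · exact fbound_III hl0 hl6 (le_of_lt h3)
    have hx0' : (0:ℝ) < x := lt_of_lt_of_le hl0 hlx
    have hy0' : (0:ℝ) < y := lt_of_lt_of_le hx0' hxy
    have hz0' : (0:ℝ) < z := lt_of_lt_of_le hy0' hyz
    have hlog : Real.log (x*y*z) = Real.log x + Real.log y + Real.log z := by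
      rw [Real.log_mul (by positivity) (ne_of_gt hz0'),
        Real.log_mul (ne_of_gt hx0') (ne_of_gt hy0')]
    have ha := amgm hl0 hl6 (show (0:ℝ) < x*y*z by positivity)
    rw [hlog] at ha
    have b1 := fb x hlx hx1
    have b2 := fb y (le_trans hlx hxy) hy1
    have b3 := fb z (le_trans (le_trans hlx hxy) hyz) hz1
    nlinarith [b1, b2, b3, ha, h3K]
  · rcases le_or_gt y l with hyl | hyl
    · -- two small : x ≤ y ≤ l
      have b1 := fI_le (le_trans hxy hyl)
      have b2 := fI_le hyl
      have b3 := fmax hl0 hl6 hz0 hz1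
      have hs := sum_neg hl0 hl6
      have hxyz : 0 ≤ x * y * z := mul_nonneg (mul_nonneg hx0 hy0) hz0
      linarith
    · -- one small : x < l ≤ y ≤ z
      have e1 := dualF_I (le_of_lt hlx)
      have hconst := const_sum hl0 hl6
      rcases le_or_gt z (1 - 2*l) with hzr | hzr
      · -- y, z in [l, r]
        have e2 := dualF_II (le_of_lt hyl) (le_trans hyz hzr)
        have e3 := dualF_II (le_trans (le_of_lt hyl) hyz) hzr
        have t2 := tangent_r hl0 hl6 (lt_of_lt_of_le hl0 (le_of_lt hyl))
        have t3 := tangent_r hl0 hl6 (lt_of_lt_of_le hl0 (le_trans (le_of_lt hyl) hyz))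
        have P := polyS3 hl6 hx0 (le_of_lt hlx) hy0 (le_trans hyz hzr) hz0 hzr
        linarith
      · rcases le_or_gt y (1 - 2*l) with hyr | hyr
        · -- y in [l,r], z in (r,1]
          have e2 := dualF_II (le_of_lt hyl) hyr
          have e3 := dualF_III hl0 hl6 (le_of_lt hzr)
          have t2 := tangent_r_quad hl0 hl6 (le_of_lt hyl) hyr
          have P := polyS2 hl0 hl6 hx0 (le_of_lt hlx) hyr (le_of_lt hzr)
          linarith
        · -- y, z in (r,1]
          have e2 := dualF_III hl0 hl6 (le_of_lt hyr)
          have e3 := dualF_III hl0 hl6 (le_of_lt hzr)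
          have P := polyS1 hl6 hx0 (le_of_lt hlx) (le_of_lt hyr) (le_of_lt hzr)
          linarith

/-- The explicit dual potential satisfies `f(x) + f(y) + f(z) ≤ xyz` on `[0,1]³`,
with equality on `M`. -/
theorem explicit_dual_xyz (l : ℝ) (hl : l ∈ Set.Ioo (0 : ℝ) (1/6)) :
    (∀ x ∈ Set.Icc (0 : ℝ) 1, ∀ y ∈ Set.Icc (0 : ℝ) 1, ∀ z ∈ Set.Icc (0 : ℝ) 1,
      dualF l x + dualF l y + dualF l z ≤ x * y * z) ∧
    (∀ p ∈ Mset l, dualF l p.1 + dualF l p.2.1 + dualF l p.2.2 = p.1 * p.2.1 * p.2.2) := by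
  obtain ⟨hl0, hl6'⟩ := hl
  have hl6 : l ≤ 1/6 := le_of_lt hl6'
  constructor
  · intro x hx y hy z hz
    obtain ⟨hx0, hx1⟩ := hx
    obtain ⟨hy0, hy1⟩ := hy
    obtain ⟨hz0, hz1⟩ := hz
    rcases le_total x y with h1 | h1 <;> rcases le_total y z with h2 | h2 <;>
      rcases le_total x z with h3 | h3
    · linarith [core hl0 hl6 hx0 hz1 h1 h2]
    · linarith [core hl0 hl6 hx0 hz1 h1 h2]
    · have := core hl0 hl6 hx0 hy1 h3 h2
      have e : x * z * y = x * y * z := by ring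
      linarith [e ▸ this]
    · have := core hl0 hl6 hz0 hy1 h3 h1
      have e : z * x * y = x * y * z := by ring
      linarith [e ▸ this]
    · have := core hl0 hl6 hy0 hz1 h1 h3
      have e : y * x * z = x * y * z := by ring
      linarith [e ▸ this]
    · have := core hl0 hl6 hy0 hx1 h2 h3
      have e : y * z * x = x * y * z := by ring
      linarith [e ▸ this]
    · have := core hl0 hl6 hz0 hx1 h2 h1
      have e : z * y * x = x * y * z := by ring
      linarith [e ▸ this]
    · have := core hl0 hl6 hz0 hx1 h2 h1
      have e : z * y * x = x * y * z := by ring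
      linarith [e ▸ this]
  · rintro p (⟨t, ht0, htl, h | h | h⟩ | ⟨h1, h2, h3, h4, h5, h6, h7⟩)
    · subst h
      simp only
      have hseg : 1 - 2*l ≤ 1 - 2*t := by linarith
      rw [dualF_I htl, dualF_III hl0 hl6 hseg]
      have hc := const_sum hl0 hl6
      simp only [cc] at hc ⊢
      linear_combination hc
    · subst h
      simp only
      have hseg : 1 - 2*l ≤ 1 - 2*t := by linarith
      rw [dualF_I htl, dualF_III hl0 hl6 hseg]
      have hc := const_sum hl0 hl6
      simp only [cc] at hc ⊢
      linear_combination hc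
    · subst h
      simp only
      have hseg : 1 - 2*l ≤ 1 - 2*t := by linarith
      rw [dualF_I htl, dualF_III hl0 hl6 hseg]
      have hc := const_sum hl0 hl6
      simp only [cc] at hc ⊢
      linear_combination hc
    · have hp1 : (0:ℝ) < p.1 := lt_of_lt_of_le hl0 h1
      have hp2 : (0:ℝ) < p.2.1 := lt_of_lt_of_le hl0 h3
      have hp3 : (0:ℝ) < p.2.2 := lt_of_lt_of_le hl0 h5
      rw [dualF_II h1 h2, dualF_II h3 h4, dualF_II h5 h6]
      have hlog : Real.log p.1 + Real.log p.2.1 + Real.log p.2.2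
          = Real.log (l * (1 - 2*l)^2) := by
        rw [← h7, Real.log_mul (by positivity) (ne_of_gt hp3),
          Real.log_mul (ne_of_gt hp1) (ne_of_gt hp2)]
      have hKK : 3 * KK l = l*(1 - 2*l)^2 - l*(1 - 2*l)^2 * Real.log (l*(1 - 2*l)^2) := by
        rw [KK, cc]; ring
      rw [h7]
      simp only [cc]
      linear_combination (l*(1 - 2*l)^2) * hlog + hKK
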